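/- Let |ψ⟩ = (U⊗V) Σ_n λ_n |b_n⟩⊗|b_n⟩ with U,V unitary and {|b_n⟩} orthonormal basis vectors of H, λ_n real. Then for operators O₁,O₂ on H, ⟨ψ| O₁⊗O₂ |ψ⟩ = Σ_n λ_n² ⟨b_n|Õ₁|b_n⟩⟨b_n|Õ₂|b_n⟩ + Σ_{m<n} λ_n λ_m Σ_{p∈Z_4} (-1)^p ⟨φ^p_{b_n b_m}|Õ₁|φ^p_{b_n b_m}⟩⟨φ^p_{b_n b_m}|Õ₂|φ^p_{b_n b_m}⟩, where Õ₁ = U†O₁U, Õ₂ = V†O₂V and |φ^p_{xy}⟩ = (|x⟩ + i^p|y⟩)/√2. -/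

import Mathlib

open Matrix

open scoped Kronecker

private lemma quadform {ι : Type*} [Fintype ι] [DecidableEq ι]
    (A : Matrix ι ι ℂ) (n m : ι) (p : ℕ) (v : ι → ℂ)
    (hv : v = fun i => ((Real.sqrt 2 : ℂ))⁻¹ *
        ((if i = n then 1 else 0) + Complex.I ^ p * (if i = m then 1 else 0))) :
    star v ⬝ᵥ A.mulVec v =
      (2:ℂ)⁻¹ * (A n n + A m m + Complex.I ^ p * A n m + (-Complex.I) ^ p * A m n) := by
  have h2 : ((Real.sqrt 2 : ℂ))⁻¹ * ((Real.sqrt 2 : ℂ))⁻¹ = (2:ℂ)⁻¹ := by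
    rw [← mul_inv, ← Complex.ofReal_mul, Real.mul_self_sqrt (by norm_num)]; norm_num
  have hv' : v = ((Real.sqrt 2:ℂ))⁻¹ • ((Pi.single n (1:ℂ) : ι → ℂ) +
      Complex.I ^ p • (Pi.single m (1:ℂ) : ι → ℂ)) := by
    funext i
    simp [hv, Pi.single_apply, mul_comm]
  have hs : star v = ((Real.sqrt 2:ℂ))⁻¹ • ((Pi.single n (1:ℂ) : ι → ℂ) +
      (-Complex.I) ^ p • (Pi.single m (1:ℂ) : ι → ℂ)) := by
    funext i
    simp only [Pi.star_apply, Pi.smul_apply, Pi.add_apply, Pi.single_apply, smul_eq_mul, hv,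
      Complex.star_def, _root_.map_mul, _root_.map_add, map_pow, map_inv₀, Complex.conj_ofReal,
      Complex.conj_I, apply_ite (starRingEnd ℂ), _root_.map_one, _root_.map_zero]
  rw [hs, hv']
  simp only [Matrix.mulVec_add, Matrix.mulVec_smul, dotProduct_add, add_dotProduct,
    dotProduct_smul, smul_dotProduct, Matrix.mulVec_single, single_dotProduct,
    smul_eq_mul, mul_one, MulOpposite.op_one, one_smul, Matrix.col_apply]
  simp only [dotProduct, Pi.single_apply, ite_mul, one_mul, zero_mul,
    Finset.sum_ite_eq', Finset.mem_univ, if_true]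
  rw [← h2]
  have hI2 : (Complex.I) ^ (p * 2) = (-1 : ℂ) ^ p := by
    rw [pow_mul']; norm_num [Complex.I_sq]
  have h1 : ((-1 : ℂ)) ^ p * (-1) ^ p = 1 := by rw [← mul_pow]; norm_num
  have hI2' : ((Complex.I ^ p) ^ 2) = (-1 : ℂ) ^ p := by rw [← pow_mul]; exact hI2
  ring_nf
  linear_combination (((Real.sqrt 2 : ℂ))⁻¹ ^ 2 * A m m * (-1 : ℂ) ^ p) * hI2' +
    (((Real.sqrt 2 : ℂ))⁻¹ ^ 2 * A m m) * h1

private lemma psum4 (a b c d a' b' c' d' : ℂ) :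
    ∑ p ∈ Finset.range 4, ((-1 : ℂ) ^ p) *
        ((2:ℂ)⁻¹ * (a + b + Complex.I ^ p * c + (-Complex.I) ^ p * d)) *
        ((2:ℂ)⁻¹ * (a' + b' + Complex.I ^ p * c' + (-Complex.I) ^ p * d')) =
      c * c' + d * d' := by
  have i2 : Complex.I ^ 2 = -1 := Complex.I_sq
  have i3 : Complex.I ^ 3 = -Complex.I := by rw [pow_succ, i2]; ring
  have n2 : (-Complex.I) ^ 2 = -1 := by rw [neg_pow]; simp [i2]
  have n3 : (-Complex.I) ^ 3 = Complex.I := by rw [neg_pow, i3]; ring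
  simp only [Finset.sum_range_succ, Finset.sum_range_zero, zero_add, pow_zero, pow_one,
    i2, i3, n2, n3, one_mul]
  linear_combination (2⁻¹ * (c * d' + d * c' - c * c' - d * d')) * i2

private lemma double_split {ι : Type*} [Fintype ι] [DecidableEq ι] [LinearOrder ι]
    (f : ι → ι → ℂ) :
    ∑ n, ∑ m, f n m =
      ∑ n, f n n + ∑ n, ∑ m ∈ Finset.univ.filter (· < n), (f n m + f m n) := by
  have key : ∀ n m : ι, f n m =
      (if m = n then f n m else 0) + (if m < n then f n m else 0) +
      (if n < m then f n m else 0) := by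
    intro n m
    rcases lt_trichotomy m n with h | h | h
    · simp [h, ne_of_lt h, not_lt.2 h.le]
    · simp [h, lt_irrefl]
    · simp [h, (ne_of_gt h), not_lt.2 h.le, lt_asymm h]
  have hswap : ∑ n, ∑ m, (if n < m then f n m else 0) =
      ∑ n, ∑ m, (if m < n then f m n else 0) := Finset.sum_comm
  calc ∑ n, ∑ m, f n m
      = ∑ n, ∑ m, ((if m = n then f n m else 0) + (if m < n then f n m else 0) +
          (if n < m then f n m else 0)) := by
        refine Finset.sum_congr rfl fun n _ => Finset.sum_congr rfl fun m _ => key n m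
    _ = ∑ n, ∑ m, (if m = n then f n m else 0)
        + (∑ n, ∑ m, (if m < n then f n m else 0)
        + ∑ n, ∑ m, (if n < m then f n m else 0)) := by
        simp [Finset.sum_add_distrib, add_assoc]
    _ = ∑ n, f n n + ∑ n, ∑ m ∈ Finset.univ.filter (· < n), (f n m + f m n) := by
        rw [hswap]
        congr 1
        · simp [Finset.sum_ite_eq']
        · rw [← Finset.sum_add_distrib]
          refine Finset.sum_congr rfl fun n _ => ?_
          rw [← Finset.sum_add_distrib, Finset.sum_filter]
          refine Finset.sum_congr rfl fun m _ => ?_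
          split <;> simp

theorem stmt3 {ι : Type*} [Fintype ι] [DecidableEq ι] [LinearOrder ι]
    (U V O₁ O₂ : Matrix ι ι ℂ)
    (hU : U ∈ Matrix.unitaryGroup ι ℂ) (hV : V ∈ Matrix.unitaryGroup ι ℂ)
    (l : ι → ℝ)
    (ψ : ι × ι → ℂ) (hψ : ∀ q, ψ q = ∑ n, (l n : ℂ) * U q.1 n * V q.2 n)
    (φ : ℕ → ι → ι → ι → ℂ)
    (hφ : ∀ p n m, φ p n m = fun i =>
      ((Real.sqrt 2 : ℂ))⁻¹ *
        ((if i = n then 1 else 0) + Complex.I ^ p * (if i = m then 1 else 0))) :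
    star ψ ⬝ᵥ ((O₁ ⊗ₖ O₂).mulVec ψ) =
      ∑ n, ((l n : ℂ) ^ 2) * ((Uᴴ * O₁ * U) n n) * ((Vᴴ * O₂ * V) n n)
      + ∑ n, ∑ m ∈ Finset.univ.filter (· < n), (l n : ℂ) * (l m : ℂ) *
          ∑ p ∈ Finset.range 4, ((-1 : ℂ) ^ p) *
            (star (φ p n m) ⬝ᵥ ((Uᴴ * O₁ * U).mulVec (φ p n m))) *
            (star (φ p n m) ⬝ᵥ ((Vᴴ * O₂ * V).mulVec (φ p n m))) := by
  classical
  set A := Uᴴ * O₁ * U with hA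
  set B := Vᴴ * O₂ * V with hB
  have lhs_eq : star ψ ⬝ᵥ ((O₁ ⊗ₖ O₂).mulVec ψ) =
      ∑ n, ∑ m, (l n : ℂ) * (l m : ℂ) * (A n m) * (B n m) := by
    set lv : ι × ι → ℂ := fun q => if q.1 = q.2 then (l q.1 : ℂ) else 0 with hlv
    have hψ' : ψ = (U ⊗ₖ V).mulVec lv := by
      funext q
      rw [hψ, Matrix.mulVec, dotProduct]
      rw [Fintype.sum_prod_type]
      simp only [kroneckerMap_apply, hlv]
      rw [Finset.sum_comm]
      refine Finset.sum_congr rfl fun n _ => ?_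
      simp [Finset.sum_ite_eq, mul_comm, mul_assoc, mul_left_comm]
    have hkr : (U ⊗ₖ V)ᴴ * (O₁ ⊗ₖ O₂) * (U ⊗ₖ V) = A ⊗ₖ B := by
      have hct : (U ⊗ₖ V)ᴴ = Uᴴ ⊗ₖ Vᴴ := by
        ext ⟨i,j⟩ ⟨k,r⟩
        simp [conjTranspose_apply, kroneckerMap_apply]
      rw [hct, ← Matrix.mul_kronecker_mul, ← Matrix.mul_kronecker_mul, hA, hB]
    rw [hψ', Matrix.star_mulVec, Matrix.mulVec_mulVec, dotProduct_mulVec,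
      Matrix.vecMul_vecMul, ← dotProduct_mulVec, ← Matrix.mulVec_mulVec]
    simp only [Matrix.mulVec_mulVec]
    rw [← Matrix.mul_assoc, hkr]
    rw [dotProduct, Fintype.sum_prod_type]
    refine Finset.sum_congr rfl fun n _ => ?_
    have hst : ∀ n', (star lv) (n, n') = if n = n' then ((l n : ℂ)) else 0 := by
      intro n'; simp only [Pi.star_apply, hlv]
      split <;> simp [Complex.conj_ofReal]
    simp only [hst, ite_mul, zero_mul, Finset.sum_ite_eq, Finset.mem_univ, if_true]
    rw [Matrix.mulVec, dotProduct, Fintype.sum_prod_type]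
    simp only [kroneckerMap_apply, hlv, mul_ite, mul_zero, Finset.sum_ite_eq, Finset.mem_univ,
      if_true]
    rw [Finset.mul_sum]
    exact Finset.sum_congr rfl fun m _ => by ring
  rw [lhs_eq, double_split (fun n m => (l n : ℂ) * (l m : ℂ) * (A n m) * (B n m))]
  congr 1
  · exact Finset.sum_congr rfl fun n _ => by ring
  · refine Finset.sum_congr rfl fun n _ => Finset.sum_congr rfl fun m hm => ?_
    have hq : ∀ p, star (φ p n m) ⬝ᵥ (A.mulVec (φ p n m)) =
        (2:ℂ)⁻¹ * (A n n + A m m + Complex.I ^ p * A n m + (-Complex.I) ^ p * A m n) :=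
      fun p => quadform A n m p _ (hφ p n m)
    have hq' : ∀ p, star (φ p n m) ⬝ᵥ (B.mulVec (φ p n m)) =
        (2:ℂ)⁻¹ * (B n n + B m m + Complex.I ^ p * B n m + (-Complex.I) ^ p * B m n) :=
      fun p => quadform B n m p _ (hφ p n m)
    simp only [hq, hq']
    rw [psum4]
    ring
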